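/- Let B = [[β₀·Id_d, −b], [−bᵀ, 2β_{d+1}]] and C = [[α₀·Id_d, −a], [−aᵀ, 2α_{d+1}]] be (d+1)×(d+1) block matrices with a, b ∈ ℝᵈ, α₀ > 0, and C positive definite. Then every eigenvalue λ of C^{−1/2} B C^{−1/2} is either λ = β₀/α₀ or a root of the quadratic (‖a‖² − 2α₀α_{d+1})λ² + 2(β_{d+1}α₀ + β₀α_{d+1} − aᵀb)λ + (‖b‖² − 2β₀β_{d+1}) = 0. -/

import Mathlib

open Matrix

section

open scoped ComplexOrder

/-- The square root of a positive semidefinite matrix, as defined in Mathlib (Dec 2024). -/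
noncomputable def Matrix.PosSemidef.sqrt {n : Type*} [Fintype n] {𝕜 : Type*} [RCLike 𝕜]
    [DecidableEq n] {A : Matrix n n 𝕜} (hA : A.PosSemidef) : Matrix n n 𝕜 :=
  hA.1.eigenvectorUnitary.1 * diagonal ((↑) ∘ (√·) ∘ hA.1.eigenvalues) *
  (star hA.1.eigenvectorUnitary : Matrix n n 𝕜)

end

/-- Every eigenvalue of `C^{-1/2} B C^{-1/2}` for the structured block matrices `B`, `C`
is either `β₀/α₀` or a root of an explicit quadratic. -/
theorem stmt9 {d : ℕ} (a b : Fin d → ℝ) (α₀ αd β₀ βd : ℝ)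
    (B C : Matrix (Fin d ⊕ Unit) (Fin d ⊕ Unit) ℝ)
    (hBdef : B = Matrix.fromBlocks (β₀ • (1 : Matrix (Fin d) (Fin d) ℝ))
      (Matrix.of fun i _ => -b i) (Matrix.of fun _ j => -b j)
      (Matrix.of fun _ _ => 2 * βd))
    (hCdef : C = Matrix.fromBlocks (α₀ • (1 : Matrix (Fin d) (Fin d) ℝ))
      (Matrix.of fun i _ => -a i) (Matrix.of fun _ j => -a j)
      (Matrix.of fun _ _ => 2 * αd))
    (hα₀ : 0 < α₀) (hC : C.PosDef) :
    ∀ lam : ℝ,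
      (∃ z : (Fin d ⊕ Unit) → ℝ, z ≠ 0 ∧
        (hC.posSemidef.sqrt⁻¹ * B * hC.posSemidef.sqrt⁻¹) *ᵥ z = lam • z) →
      lam = β₀ / α₀ ∨
        ((∑ i, a i ^ 2) - 2 * α₀ * αd) * lam ^ 2
          + 2 * (βd * α₀ + β₀ * αd - ∑ i, a i * b i) * lam
          + ((∑ i, b i ^ 2) - 2 * β₀ * βd) = 0 := by
  rintro lam ⟨z, hz, h0⟩
  set S := hC.posSemidef.sqrt with hS
  have hSS : S * S = C := by
    have hA := hC.posSemidef
    have hU := Unitary.coe_star_mul_self hA.1.eigenvectorUnitary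
    rw [hS]
    unfold Matrix.PosSemidef.sqrt
    conv_rhs => rw [hA.1.spectral_theorem, Unitary.conjStarAlgAut_apply]
    simp only [mul_assoc]
    rw [← mul_assoc (star hA.1.eigenvectorUnitary : Matrix (Fin d ⊕ Unit) (Fin d ⊕ Unit) ℝ) _, hU, one_mul,
      ← mul_assoc (diagonal _), diagonal_mul_diagonal]
    congr 3
    funext i
    simp [Real.mul_self_sqrt (hA.eigenvalues_nonneg i)]
  have hdet : IsUnit S.det := by
    have hCdet : C.det ≠ 0 := hC.det_pos.ne'
    have : S.det * S.det = C.det := by rw [← det_mul, hSS]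
    exact isUnit_iff_ne_zero.2 (fun h => hCdet (by rw [← this, h, mul_zero]))
  have hSinvS : S⁻¹ * S = 1 := nonsing_inv_mul S hdet
  have hSSinv : S * S⁻¹ = 1 := mul_nonsing_inv S hdet
  set x := S⁻¹ *ᵥ z with hx
  have hBx : B *ᵥ x = lam • (C *ᵥ x) := by
    have h1 : S *ᵥ ((S⁻¹ * B * S⁻¹) *ᵥ z) = S *ᵥ (lam • z) := by rw [h0]
    rw [mulVec_mulVec, mulVec_smul] at h1
    calc B *ᵥ x = (B * S⁻¹) *ᵥ z := by rw [hx, mulVec_mulVec]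
    _ = (S * (S⁻¹ * B * S⁻¹)) *ᵥ z := by
        rw [show S * (S⁻¹ * B * S⁻¹) = (S * S⁻¹) * B * S⁻¹ by rw [← mul_assoc, ← mul_assoc], hSSinv, one_mul]
    _ = lam • (S *ᵥ z) := h1
    _ = lam • (C *ᵥ x) := by
        rw [hx, mulVec_mulVec, show C * S⁻¹ = S * S * S⁻¹ by rw [hSS],
          mul_assoc, hSSinv, mul_one]
  have hxne : x ≠ 0 := by
    intro h
    apply hz
    have : z = S *ᵥ x := by rw [hx, mulVec_mulVec, hSSinv, one_mulVec]
    rw [this, h, mulVec_zero]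
  clear h0 hz hSinvS hSSinv hdet hSS hS
  subst hBdef hCdef
  -- component equations
  have heq1 : ∀ i : Fin d, β₀ * x (Sum.inl i) - b i * x (Sum.inr ()) =
      lam * (α₀ * x (Sum.inl i) - a i * x (Sum.inr ())) := by
    intro i
    have := congrFun hBx (Sum.inl i)
    simp [mulVec, dotProduct, Fintype.sum_sum_type, Matrix.one_apply, mul_ite,
      Finset.sum_ite_eq, mul_comm] at this
    linarith [this]
  have heq2 : -(∑ j, b j * x (Sum.inl j)) + 2 * βd * x (Sum.inr ()) =
      lam * (-(∑ j, a j * x (Sum.inl j)) + 2 * αd * x (Sum.inr ())) := by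
    have := congrFun hBx (Sum.inr ())
    simp [mulVec, dotProduct, Fintype.sum_sum_type, Finset.sum_neg_distrib, mul_comm] at this
    linarith [this]
  set θ := x (Sum.inr ()) with hθ
  by_cases hc : β₀ - lam * α₀ = 0
  · left
    rw [eq_div_iff hα₀.ne']
    linarith
  by_cases hθ0 : θ = 0
  · -- θ = 0 : all coordinates vanish, contradiction
    exfalso
    apply hxne
    funext k
    cases k with
    | inl i =>
      have h1 := heq1 i
      rw [hθ0] at h1
      have : (β₀ - lam * α₀) * x (Sum.inl i) = 0 := by linarith
      have := mul_eq_zero.1 this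
      simp only [Pi.zero_apply]
      tauto
    | inr u => cases u; simpa using hθ0
  · right
    set Sb := ∑ j, b j * x (Sum.inl j)
    set Sa := ∑ j, a j * x (Sum.inl j)
    have hux : ∀ i, x (Sum.inl i) * (β₀ - lam * α₀) = (b i - lam * a i) * θ := by
      intro i
      linear_combination heq1 i
    have sumEq : (∑ i, (b i - lam * a i) * x (Sum.inl i)) * (β₀ - lam * α₀)
        = (∑ i, (b i - lam * a i) ^ 2) * θ := by
      rw [Finset.sum_mul, Finset.sum_mul]
      refine Finset.sum_congr rfl fun i _ => ?_
      linear_combination (b i - lam * a i) * hux i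
    have split : (∑ i, (b i - lam * a i) * x (Sum.inl i)) = Sb - lam * Sa := by
      simp only [Sb, Sa, Finset.mul_sum, ← Finset.sum_sub_distrib]
      exact Finset.sum_congr rfl fun i _ => by ring
    have keyθ : (∑ i, (b i - lam * a i) ^ 2) * θ
        = 2 * (βd - lam * αd) * (β₀ - lam * α₀) * θ := by
      linear_combination (-1 : ℝ) * sumEq + (β₀ - lam * α₀) * split - (β₀ - lam * α₀) * heq2
    have key : (∑ i, (b i - lam * a i) ^ 2)
        = 2 * (βd - lam * αd) * (β₀ - lam * α₀) :=
      mul_right_cancel₀ hθ0 keyθ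
    have expand : (∑ i, (b i - lam * a i) ^ 2)
        = (∑ i, b i ^ 2) - 2 * lam * (∑ i, a i * b i) + lam ^ 2 * (∑ i, a i ^ 2) := by
      have : ∀ i, (b i - lam * a i) ^ 2
          = b i ^ 2 - 2 * lam * (a i * b i) + lam ^ 2 * a i ^ 2 := fun i => by ring
      simp_rw [this]
      rw [Finset.sum_add_distrib, Finset.sum_sub_distrib, ← Finset.mul_sum, ← Finset.mul_sum]
    linear_combination key - expand
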